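/- Let m ≥ 3 be an integer and let ζ ∈ ℂ be a primitive m-th root of unity. Then 2 + ζ + ζ⁻¹ is a real algebraic integer and every root in ℂ of its minimal polynomial over ℚ is real and lies strictly between 0 and 4. -/

import Mathlib

open Complex Polynomial

lemma key_real (m : ℕ) (hm : 3 ≤ m) (ξ : ℂ) (hξ : orderOf ξ = m) :
    (2 + ξ + ξ⁻¹).im = 0 ∧ 0 < (2 + ξ + ξ⁻¹).re ∧ (2 + ξ + ξ⁻¹).re < 4 := by
  have hm0 : m ≠ 0 := by omega
  have hpow : ξ ^ m = 1 := by rw [← hξ]; exact pow_orderOf_eq_one ξ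
  have habs : ‖ξ‖ = 1 :=
    Complex.norm_eq_one_of_pow_eq_one hpow hm0
  have hinv : ξ⁻¹ = starRingEnd ℂ ξ := Complex.inv_eq_conj habs
  have hsq : ξ.re ^ 2 + ξ.im ^ 2 = 1 := by
    have := Complex.sq_norm ξ
    rw [habs] at this
    have h2 : Complex.normSq ξ = 1 := by rw [← this]; norm_num
    rw [Complex.normSq_apply] at h2; nlinarith
  have hne1 : ξ ≠ 1 := by
    intro h; rw [h, orderOf_one] at hξ; omega
  have hnem1 : ξ ≠ -1 := by
    intro h
    rw [h] at hξ
    have : orderOf (-1 : ℂ) = 2 := by rw [orderOf_neg_one]; norm_num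
    omega
  have hre_lt : ξ.re < 1 := by
    have hle : ξ.re ≤ 1 := by have := Complex.re_le_norm ξ; rw [habs] at this; exact this
    rcases lt_or_eq_of_le hle with h | h
    · exact h
    · exfalso
      apply hne1
      have him : ξ.im = 0 := by nlinarith
      apply Complex.ext <;> simp [h, him]
  have hre_gt : -1 < ξ.re := by
    have hle : -1 ≤ ξ.re := by
      have := Complex.abs_re_le_norm ξ
      rw [habs] at this
      cases abs_le.mp this with
      | intro h1 h2 => exact h1
    rcases lt_or_eq_of_le hle with h | h
    · exact h
    · exfalso
      apply hnem1
      have him : ξ.im = 0 := by nlinarith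
      apply Complex.ext <;> simp [← h, him]
  refine ⟨?_, ?_, ?_⟩
  · rw [hinv]; simp
  · rw [hinv]; simp; nlinarith
  · rw [hinv]; simp; nlinarith

lemma int_aux (m : ℕ) (hm0 : m ≠ 0) (ξ : ℂ) (hpow : ξ ^ m = 1) :
    IsIntegral ℤ (2 + ξ + ξ⁻¹) := by
  have hint : IsIntegral ℤ ξ := by
    refine ⟨X ^ m - 1, ?_, ?_⟩
    · exact monic_X_pow_sub_C 1 hm0
    · simp [hpow]
  have hinv : ξ⁻¹ = ξ ^ (m - 1) := by
    have hne : ξ ≠ 0 := by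
      intro h; rw [h] at hpow; simp [zero_pow hm0] at hpow
    field_simp
    rw [← pow_succ']
    have : m - 1 + 1 = m := by omega
    rw [this, hpow]
  rw [hinv]
  have h2 : IsIntegral ℤ (2 : ℂ) := by
    have := isIntegral_algebraMap (R := ℤ) (A := ℂ) (x := 2)
    simpa using this
  exact (h2.add hint).add (hint.pow _)

open IntermediateField in
theorem two_add_zeta_add_zeta_inv_totally_positive
    (m : ℕ) (hm : 3 ≤ m) (ζ : ℂ) (hζ : orderOf ζ = m) :
    IsIntegral ℤ (2 + ζ + ζ⁻¹) ∧ (2 + ζ + ζ⁻¹).im = 0 ∧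
    ∀ z : ℂ, Polynomial.aeval z (minpoly ℚ (2 + ζ + ζ⁻¹)) = 0 →
      z.im = 0 ∧ 0 < z.re ∧ z.re < 4 := by
  have hm0 : m ≠ 0 := by omega
  have hpow : ζ ^ m = 1 := by rw [← hζ]; exact pow_orderOf_eq_one ζ
  set x : ℂ := 2 + ζ + ζ⁻¹ with hxdef
  have hint : IsIntegral ℤ x := int_aux m hm0 ζ hpow
  have hζQ : IsIntegral ℚ ζ := by
    refine ⟨X ^ m - 1, monic_X_pow_sub_C 1 hm0, by simp [hpow]⟩
  refine ⟨hint, (key_real m hm ζ hζ).1, ?_⟩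
  intro z hz
  have hζE : ζ ∈ adjoin ℚ ({ζ} : Set ℂ) := subset_adjoin ℚ _ rfl
  have hxE : x ∈ adjoin ℚ ({ζ} : Set ℂ) := by
    refine add_mem (add_mem ?_ hζE) (inv_mem hζE)
    have := (adjoin ℚ ({ζ} : Set ℂ)).algebraMap_mem (2 : ℚ)
    simpa using this
  have hK : ∀ s ∈ ({ζ} : Set ℂ), IsIntegral ℚ s ∧
      ((minpoly ℚ s).map (algebraMap ℚ ℂ)).Splits := by
    rintro s rfl
    exact ⟨hζQ, IsAlgClosed.splits _⟩
  obtain ⟨φ, hφ⟩ := exists_algHom_adjoin_of_splits_of_aeval hK hxE hz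
  set ξ : ℂ := φ ⟨ζ, hζE⟩ with hξdef
  have hφinj : Function.Injective φ := RingHom.injective (φ.toRingHom)
  have hordξ : orderOf ξ = m := by
    have h1 : orderOf (φ ⟨ζ, hζE⟩) = orderOf (⟨ζ, hζE⟩ : adjoin ℚ ({ζ} : Set ℂ)) := by
      simpa using orderOf_injective φ.toRingHom.toMonoidHom hφinj ⟨ζ, hζE⟩
    have h2 : orderOf (⟨ζ, hζE⟩ : adjoin ℚ ({ζ} : Set ℂ)) = orderOf ζ := by
      have := orderOf_injective (algebraMap (adjoin ℚ ({ζ} : Set ℂ)) ℂ).toMonoidHom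
        (RingHom.injective _) ⟨ζ, hζE⟩
      simpa using this.symm
    rw [hξdef, h1, h2, hζ]
  have hzx : z = 2 + ξ + ξ⁻¹ := by
    have h3 : (⟨x, hxE⟩ : adjoin ℚ ({ζ} : Set ℂ)) =
        2 + ⟨ζ, hζE⟩ + (⟨ζ, hζE⟩ : adjoin ℚ ({ζ} : Set ℂ))⁻¹ := by
      apply Subtype.ext
      push_cast
      rfl
    rw [h3] at hφ
    rw [map_add, map_add, map_inv₀, map_ofNat] at hφ
    rw [← hφ, hξdef]
  obtain ⟨h1, h2, h3⟩ := key_real m hm ξ hordξ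
  rw [hzx]
  exact ⟨h1, h2, h3⟩
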